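/- arXiv:1308.4103 — 3 statements merged into one kernel-verified Lean document; each statement's English description precedes it below -/
import Mathlib

section
/- Let A be a normal n×n complex matrix with Cartesian decomposition A = A₁ + iA₂. Then for every index j (1 ≤ j ≤ n), (1/√2)·s_j(A₁ + A₂) ≤ s_j(A) ≤ s_j(|A₁| + |A₂|). -/
open Matrix
open scoped ComplexOrder

/-- `singularValues X j` is the `(j+1)`-th largest singular value of `X`, i.e. the
decreasingly ordered square roots of the eigenvalues of `Xᴴ * X`. -/
noncomputable def singularValues {m : ℕ} (X : Matrix (Fin m) (Fin m) ℂ) : Fin m → ℝ :=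
  fun j => Real.sqrt
    ((Matrix.isHermitian_conjTranspose_mul_self X).eigenvalues
      (Tuple.sort (Matrix.isHermitian_conjTranspose_mul_self X).eigenvalues j.rev))

/-- `matAbs X = |X|` is the positive semidefinite square root of `Xᴴ * X`. -/
noncomputable def matAbs {m : ℕ} (X : Matrix (Fin m) (Fin m) ℂ) : Matrix (Fin m) (Fin m) ℂ :=
  (Matrix.posSemidef_conjTranspose_mul_self X).1.eigenvectorUnitary.1 *
    Matrix.diagonal ((↑) ∘ (Real.sqrt ·) ∘ (Matrix.posSemidef_conjTranspose_mul_self X).1.eigenvalues) *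
    (star (Matrix.posSemidef_conjTranspose_mul_self X).1.eigenvectorUnitary : Matrix (Fin m) (Fin m) ℂ)

/-- `dsum X Y = X ⊕ Y` is the block diagonal matrix with diagonal blocks `X` and `Y`. -/
noncomputable def dsum {m : ℕ} (X Y : Matrix (Fin m) (Fin m) ℂ) :
    Matrix (Fin (m + m)) (Fin (m + m)) ℂ :=
  Matrix.reindex finSumFinEquiv finSumFinEquiv (Matrix.fromBlocks X 0 0 Y)

/-- `matPosPart X = X⁺ = (|X| + X)/2`. -/
noncomputable def matPosPart {m : ℕ} (X : Matrix (Fin m) (Fin m) ℂ) : Matrix (Fin m) (Fin m) ℂ :=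
  (2 : ℂ)⁻¹ • (matAbs X + X)

/-- `matNegPart X = X⁻ = (|X| - X)/2`. -/
noncomputable def matNegPart {m : ℕ} (X : Matrix (Fin m) (Fin m) ℂ) : Matrix (Fin m) (Fin m) ℂ :=
  (2 : ℂ)⁻¹ • (matAbs X - X)

section
open Finset
namespace SortAux
variable {n : ℕ}

lemma multiset_ofFn (f : Fin n → ℝ) : (Finset.univ.val.map f) = ↑(List.ofFn f) := by
  rw [List.ofFn_eq_map, ← Multiset.map_coe]
  rfl

lemma sort_eq_of_multiset_eq {f g : Fin n → ℝ}
    (h : Finset.univ.val.map f = Finset.univ.val.map g) :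
    f ∘ Tuple.sort f = g ∘ Tuple.sort g := by
  have key : ∀ (h : Fin n → ℝ), Finset.univ.val.map (h ∘ Tuple.sort h) = Finset.univ.val.map h := by
    intro h
    have : Multiset.map (⇑(Tuple.sort h)) Finset.univ.val = Finset.univ.val := by
      calc Multiset.map (⇑(Tuple.sort h)) Finset.univ.val
          = (Finset.univ.map (Tuple.sort h).toEmbedding).val := rfl
        _ = Finset.univ.val := by rw [Finset.map_univ_equiv]
    calc Finset.univ.val.map (h ∘ Tuple.sort h)
        = (Finset.univ.val.map (Tuple.sort h)).map h := by rw [Multiset.map_map]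
      _ = Finset.univ.val.map h := by rw [this]
  have hperm : (List.ofFn (f ∘ Tuple.sort f) : Multiset ℝ) = ↑(List.ofFn (g ∘ Tuple.sort g)) := by
    rw [← multiset_ofFn, ← multiset_ofFn, key, key, h]
  have := List.Perm.eq_of_sortedLE
    (List.sortedLE_ofFn_iff.mpr (Tuple.monotone_sort f))
    (List.sortedLE_ofFn_iff.mpr (Tuple.monotone_sort g)) (Multiset.coe_eq_coe.mp hperm)
  exact funext fun i => by
    have := List.ofFn_inj.mp this
    exact congrFun this i

lemma sort_le_sort {f g : Fin n → ℝ} (hfg : ∀ i, f i ≤ g i) (j : Fin n) :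
    (f ∘ Tuple.sort f) j ≤ (g ∘ Tuple.sort g) j := by
  by_contra hlt
  push_neg at hlt
  set F := f ∘ Tuple.sort f with hF
  set G := g ∘ Tuple.sort g with hG
  have hB : (Finset.Ici j).image (Tuple.sort f) ⊆ Finset.univ.filter (fun i => G j < f i) := by
    intro i hi
    simp only [Finset.mem_image, Finset.mem_Ici] at hi
    obtain ⟨k, hk, rfl⟩ := hi
    simp only [Finset.mem_filter, Finset.mem_univ, true_and]
    exact hlt.trans_le (Tuple.monotone_sort f hk)
  have hC : Finset.univ.filter (fun i => G j < g i) ⊆ (Finset.Ioi j).image (Tuple.sort g) := by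
    intro i hi
    simp only [Finset.mem_filter, Finset.mem_univ, true_and] at hi
    simp only [Finset.mem_image, Finset.mem_Ioi]
    refine ⟨(Tuple.sort g).symm i, ?_, by simp⟩
    by_contra hle
    push_neg at hle
    have : g i = G ((Tuple.sort g).symm i) := by simp [hG]
    have : g i ≤ G j := by rw [this]; exact Tuple.monotone_sort g hle
    exact absurd (hi.trans_le this) (lt_irrefl _)
  have hsub : Finset.univ.filter (fun i => G j < f i) ⊆ Finset.univ.filter (fun i => G j < g i) := by
    intro i hi
    simp only [Finset.mem_filter, Finset.mem_univ, true_and] at hi ⊢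
    exact hi.trans_le (hfg i)
  have c1 : n - (j : ℕ) ≤ (Finset.univ.filter (fun i => G j < f i)).card := by
    calc n - (j:ℕ) = (Finset.Ici j).card := (Fin.card_Ici j).symm
      _ = ((Finset.Ici j).image (Tuple.sort f)).card :=
          (Finset.card_image_of_injective _ (Tuple.sort f).injective).symm
      _ ≤ _ := Finset.card_le_card hB
  have c2 : (Finset.univ.filter (fun i => G j < g i)).card ≤ n - 1 - (j:ℕ) := by
    calc (Finset.univ.filter (fun i => G j < g i)).card
        ≤ ((Finset.Ioi j).image (Tuple.sort g)).card := Finset.card_le_card hC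
      _ = (Finset.Ioi j).card := Finset.card_image_of_injective _ (Tuple.sort g).injective
      _ = n - 1 - (j:ℕ) := Fin.card_Ioi j
  have := (c1.trans (Finset.card_le_card hsub)).trans c2
  have hj := j.isLt
  omega

lemma comp_mono_sort {f : Fin n → ℝ} {φ : ℝ → ℝ} (hφ : Monotone φ) :
    (φ ∘ f) ∘ Tuple.sort (φ ∘ f) = (φ ∘ f) ∘ Tuple.sort f :=
  (Tuple.comp_sort_eq_comp_iff_monotone.mpr (hφ.comp (Tuple.monotone_sort f))).symm

end SortAux
end

section
open Matrix Polynomial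
namespace CharAux
variable {n : ℕ}

lemma charmatrix_conj (U M W : Matrix (Fin n) (Fin n) ℂ) (h : U * W = 1) :
    charmatrix (U * M * W) =
      (C : ℂ →+* ℂ[X]).mapMatrix U * charmatrix M * (C : ℂ →+* ℂ[X]).mapMatrix W := by
  have hmap : ((C : ℂ →+* ℂ[X]).mapMatrix U) * ((C : ℂ →+* ℂ[X]).mapMatrix W) = 1 := by
    rw [← _root_.map_mul, h, _root_.map_one]
  rw [charmatrix, charmatrix]
  rw [mul_sub, sub_mul]
  congr 1
  · rw [mul_assoc, scalar_commute X (fun r => Commute.all _ _) _, ← mul_assoc, hmap, one_mul]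
  · simp [← _root_.map_mul, mul_assoc]

lemma charpoly_conj (U M : Matrix (Fin n) (Fin n) ℂ) (hU : Uᴴ * U = 1) :
    (U * M * Uᴴ).charpoly = M.charpoly := by
  have hU' : U * Uᴴ = 1 := mul_eq_one_comm.mp hU
  have hmap : ((C : ℂ →+* ℂ[X]).mapMatrix Uᴴ) * ((C : ℂ →+* ℂ[X]).mapMatrix U) = 1 := by
    rw [← _root_.map_mul, hU, _root_.map_one]
  simp only [Matrix.charpoly]
  rw [charmatrix_conj U M Uᴴ hU', det_mul, det_mul]
  rw [mul_comm, ← mul_assoc, ← det_mul, hmap, det_one, one_mul]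

lemma charpoly_diag (d : Fin n → ℂ) :
    (Matrix.diagonal d).charpoly = ∏ i, (X - C (d i)) := by
  have : charmatrix (Matrix.diagonal d) = Matrix.diagonal (fun i => X - C (d i)) := by
    ext i j
    by_cases h : i = j
    · subst h; simp [charmatrix_apply_eq]
    · simp [charmatrix_apply_ne _ _ _ h, Matrix.diagonal_apply_ne _ h]
  rw [Matrix.charpoly, this, det_diagonal]

lemma multiset_eq_of_conj_eq {U V : Matrix (Fin n) (Fin n) ℂ}
    (hU : Uᴴ * U = 1) (hV : Vᴴ * V = 1) {d e : Fin n → ℂ}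
    (h : U * Matrix.diagonal d * Uᴴ = V * Matrix.diagonal e * Vᴴ) :
    Finset.univ.val.map d = Finset.univ.val.map e := by
  have hc : (∏ i, (X - C (d i))) = ∏ i, (X - C (e i)) := by
    have h2 : (U * Matrix.diagonal d * Uᴴ).charpoly = (V * Matrix.diagonal e * Vᴴ).charpoly := by
      rw [h]
    rwa [charpoly_conj U _ hU, charpoly_conj V _ hV, charpoly_diag d, charpoly_diag e] at h2
  have key : ∀ f : Fin n → ℂ, (∏ i, (X - C (f i))) =
      (Multiset.map (fun a => X - C a) (Finset.univ.val.map f)).prod := by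
    intro f
    rw [Multiset.map_map]
    rfl
  have := congrArg Polynomial.roots hc
  rwa [key d, key e, roots_multiset_prod_X_sub_C, roots_multiset_prod_X_sub_C] at this

lemma multiset_real_eq {d e : Fin n → ℝ}
    (h : Finset.univ.val.map (fun i => (d i : ℂ)) = Finset.univ.val.map (fun i => (e i : ℂ))) :
    Finset.univ.val.map d = Finset.univ.val.map e := by
  apply Multiset.map_injective (f := fun x : ℝ => (x : ℂ)) Complex.ofReal_injective
  rw [Multiset.map_map, Multiset.map_map]
  exact h

end CharAux

namespace MatAux
variable {n : ℕ}

def colMat (u : Fin n → (Fin n → ℂ)) : Matrix (Fin n) (Fin n) ℂ := Matrix.of fun i k => u k i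

lemma colMat_unitary {u : Fin n → (Fin n → ℂ)}
    (h : ∀ k l, (∑ i, (starRingEnd ℂ) (u k i) * u l i) = if k = l then 1 else 0) :
    (colMat u)ᴴ * colMat u = 1 := by
  ext k l
  rw [mul_apply, Matrix.one_apply]
  simpa [colMat, conjTranspose_apply] using h k l

lemma diag_rep {u : Fin n → (Fin n → ℂ)} (hU : (colMat u)ᴴ * colMat u = 1)
    {M : Matrix (Fin n) (Fin n) ℂ} {c : Fin n → ℂ} (h : ∀ k, M *ᵥ u k = c k • u k) :
    M = colMat u * diagonal c * (colMat u)ᴴ := by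
  have hU' : colMat u * (colMat u)ᴴ = 1 := mul_eq_one_comm.mp hU
  have h2 : M * colMat u = colMat u * diagonal c := by
    ext i k
    rw [Matrix.mul_diagonal, mul_apply]
    have := congrFun (h k) i
    simp only [mulVec, dotProduct, Pi.smul_apply, smul_eq_mul] at this
    simp only [colMat, Matrix.of_apply]
    rw [this, mul_comm]
  calc M = M * (colMat u * (colMat u)ᴴ) := by rw [hU', mul_one]
    _ = (M * colMat u) * (colMat u)ᴴ := by rw [mul_assoc]
    _ = colMat u * diagonal c * (colMat u)ᴴ := by rw [h2]

lemma rep_apply {u : Fin n → (Fin n → ℂ)} (hU : (colMat u)ᴴ * colMat u = 1)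
    (c : Fin n → ℂ) (k : Fin n) :
    (colMat u * diagonal c * (colMat u)ᴴ) *ᵥ u k = c k • u k := by
  have husingle : u k = colMat u *ᵥ Pi.single k 1 := by
    ext i
    simp [colMat, mulVec, dotProduct, Pi.single_apply]
  rw [husingle, mulVec_mulVec, mul_assoc, mul_assoc]
  rw [show (colMat u)ᴴ * colMat u = 1 from hU]
  rw [mul_one, ← mulVec_mulVec]
  have : diagonal c *ᵥ Pi.single k 1 = Pi.single k (c k) := by
    ext i
    by_cases h : i = k
    · subst h; simp [mulVec, dotProduct, diagonal, Pi.single_apply]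
    · simp [mulVec, dotProduct, diagonal, Pi.single_apply, h]
  rw [this]
  ext i
  by_cases h : i = k
  · subst h; simp [mulVec, dotProduct, Pi.single_apply, mul_comm]
  · simp [mulVec, dotProduct, Pi.single_apply, h, mul_comm]

-- KEY lemma
lemma singularValues_eq_sorted {Xm : Matrix (Fin n) (Fin n) ℂ}
    {u : Fin n → (Fin n → ℂ)} (hU : (colMat u)ᴴ * colMat u = 1)
    (r : Fin n → ℝ) (hX : ∀ k, (Xmᴴ * Xm) *ᵥ u k = ((r k : ℂ)) • u k) (j : Fin n) :
    singularValues Xm j =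
      (((fun k => Real.sqrt (r k)) ∘ Tuple.sort (fun k => Real.sqrt (r k))) j.rev) := by
  have h := Matrix.isHermitian_conjTranspose_mul_self Xm
  set e := (Matrix.isHermitian_conjTranspose_mul_self Xm).eigenvalues with he
  have hrep : Xmᴴ * Xm = colMat u * diagonal (fun k => (r k : ℂ)) * (colMat u)ᴴ :=
    diag_rep hU hX
  have hVmem := (Matrix.isHermitian_conjTranspose_mul_self Xm).eigenvectorUnitary.2
  set V := ((Matrix.isHermitian_conjTranspose_mul_self Xm).eigenvectorUnitary : Matrix (Fin n) (Fin n) ℂ) with hVdef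
  have hV : Vᴴ * V = 1 := by
    rw [← Matrix.star_eq_conjTranspose]
    exact (Matrix.mem_unitaryGroup_iff'.mp hVmem)
  have hspec : Xmᴴ * Xm = V * diagonal (fun k => (e k : ℂ)) * Vᴴ := by
    have := (Matrix.isHermitian_conjTranspose_mul_self Xm).spectral_theorem
    rw [Unitary.conjStarAlgAut_apply] at this
    rw [this]; rfl
  have hms : Finset.univ.val.map e = Finset.univ.val.map r := by
    apply CharAux.multiset_real_eq
    exact CharAux.multiset_eq_of_conj_eq hV hU (by rw [← hspec, hrep])
  have hsorteq : (fun k => Real.sqrt (e k)) ∘ Tuple.sort (fun k => Real.sqrt (e k))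
      = (fun k => Real.sqrt (r k)) ∘ Tuple.sort (fun k => Real.sqrt (r k)) := by
    apply SortAux.sort_eq_of_multiset_eq
    have : Finset.univ.val.map (fun k => Real.sqrt (e k))
        = Multiset.map Real.sqrt (Finset.univ.val.map e) := by rw [Multiset.map_map]; rfl
    rw [this, hms, Multiset.map_map]
    rfl
  have hmono : Monotone Real.sqrt := fun x y hxy => Real.sqrt_le_sqrt hxy
  have hc := SortAux.comp_mono_sort (f := e) hmono
  show Real.sqrt (e (Tuple.sort e j.rev)) = _
  have step : Real.sqrt (e (Tuple.sort e j.rev))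
      = ((Real.sqrt ∘ e) ∘ Tuple.sort (Real.sqrt ∘ e)) j.rev := by
    rw [hc]; rfl
  rw [step]
  exact congrFun hsorteq j.rev

end MatAux
end

section
open Matrix Module.End LinearMap
namespace BasisAux
variable {n : ℕ}


set_option maxHeartbeats 1000000 in
theorem joint_eigenbasis {T₁ T₂ : EuclideanSpace ℂ (Fin n) →ₗ[ℂ] EuclideanSpace ℂ (Fin n)} (h1 : T₁.IsSymmetric) (h2 : T₂.IsSymmetric)
    (hc : Commute T₁ T₂) :
    ∃ (u : OrthonormalBasis (Fin n) ℂ (EuclideanSpace ℂ (Fin n))) (a b : Fin n → ℝ),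
      ∀ k, T₁ (u k) = (a k : ℂ) • u k ∧ T₂ (u k) = (b k : ℂ) • u k := by
  classical
  have hinj : Function.Injective
      (fun p : Eigenvalues T₁ × Eigenvalues T₂ => (((p.2 : ℂ), (p.1 : ℂ)) : ℂ × ℂ)) := by
    intro p q hpq
    simp only [Prod.mk.injEq] at hpq
    exact Prod.ext (Subtype.ext hpq.2) (Subtype.ext hpq.1)
  have horth :=
    (LinearMap.IsSymmetric.orthogonalFamily_eigenspace_inf_eigenspace h1 h2).comp hinj
  have htop : (⨆ i : Eigenvalues T₁ × Eigenvalues T₂,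
      (eigenspace T₁ i.1 ⊓ eigenspace T₂ i.2 : Submodule ℂ (EuclideanSpace ℂ (Fin n)))) = ⊤ := by
    refine le_antisymm le_top ?_
    rw [← LinearMap.IsSymmetric.iSup_iSup_eigenspace_inf_eigenspace_eq_top_of_commute h1 h2 hc]
    refine iSup_le fun α => iSup_le fun γ => ?_
    by_cases hα : eigenspace T₁ α = ⊥
    · simp [hα]
    by_cases hγ : eigenspace T₂ γ = ⊥
    · simp [hγ]
    exact le_iSup (fun i : Eigenvalues T₁ × Eigenvalues T₂ => (eigenspace T₁ i.1 ⊓ eigenspace T₂ i.2 : Submodule ℂ (EuclideanSpace ℂ (Fin n)))) ⟨⟨α, hα⟩, ⟨γ, hγ⟩⟩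
  have hint : DirectSum.IsInternal (fun i : Eigenvalues T₁ × Eigenvalues T₂ =>
      (eigenspace T₁ i.1 ⊓ eigenspace T₂ i.2 : Submodule ℂ (EuclideanSpace ℂ (Fin n)))) :=
    horth.isInternal_iff.mpr (by rw [htop, Submodule.top_orthogonal_eq_bot])
  have hn : Module.finrank ℂ (EuclideanSpace ℂ (Fin n)) = n := finrank_euclideanSpace_fin
  set u := hint.subordinateOrthonormalBasis hn horth with hu
  refine ⟨u, fun k => Complex.re ((hint.subordinateOrthonormalBasisIndex hn k horth).1 : ℂ),
    fun k => Complex.re ((hint.subordinateOrthonormalBasisIndex hn k horth).2 : ℂ), fun k => ?_⟩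
  have hmem := hint.subordinateOrthonormalBasis_subordinate hn k horth
  have hm1 := (Submodule.mem_inf.mp hmem).1
  have hm2 := (Submodule.mem_inf.mp hmem).2
  have hne : u k ≠ 0 := u.toBasis.ne_zero k
  rw [mem_eigenspace_iff] at hm1 hm2
  set μ := ((hint.subordinateOrthonormalBasisIndex hn k horth).1 : ℂ)
  set ν := ((hint.subordinateOrthonormalBasisIndex hn k horth).2 : ℂ)
  have hμ : (Complex.re μ : ℂ) = μ := by
    rw [← Complex.conj_eq_iff_re]
    exact h1.conj_eigenvalue_eq_self (hasEigenvalue_of_hasEigenvector ⟨mem_eigenspace_iff.mpr hm1, hne⟩)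
  have hν : (Complex.re ν : ℂ) = ν := by
    rw [← Complex.conj_eq_iff_re]
    exact h2.conj_eigenvalue_eq_self (hasEigenvalue_of_hasEigenvector ⟨mem_eigenspace_iff.mpr hm2, hne⟩)
  exact ⟨by rw [hμ]; exact hm1, by rw [hν]; exact hm2⟩

end BasisAux

end

namespace AbsAux
lemma matAbs_eq_cfc {m : ℕ} (X : Matrix (Fin m) (Fin m) ℂ) :
    matAbs X = cfc Real.sqrt (Xᴴ * X) := by
  rw [(Matrix.posSemidef_conjTranspose_mul_self X).1.cfc_eq, IsHermitian.cfc,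
    Unitary.conjStarAlgAut_apply]
  rfl

lemma matAbs_isHermitian {m : ℕ} (X : Matrix (Fin m) (Fin m) ℂ) : (matAbs X).IsHermitian := by
  rw [matAbs_eq_cfc]
  exact cfc_predicate Real.sqrt (Xᴴ * X)

open scoped MatrixOrder in
lemma eq_matAbs {m : ℕ} {M N : Matrix (Fin m) (Fin m) ℂ} (hN : N.PosSemidef)
    (h : N ^ 2 = Mᴴ * M) : N = matAbs M := by
  have hpsd := Matrix.posSemidef_conjTranspose_mul_self M
  rw [matAbs_eq_cfc, ← cfcₙ_eq_cfc, ← CFC.sqrt_eq_real_sqrt _ hpsd.nonneg]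
  exact (CFC.sqrt_unique (by rw [← sq]; exact h) hN.nonneg).symm
end AbsAux

/-- Let `A` be a normal `n×n` complex matrix with Cartesian decomposition `A = A₁ + iA₂`.
Then for every index `j`, `(1/√2)·s_j(A₁ + A₂) ≤ s_j(A) ≤ s_j(|A₁| + |A₂|)`. -/
theorem stmt_1 {n : ℕ} (A A₁ A₂ : Matrix (Fin n) (Fin n) ℂ)
    (h1 : A₁.IsHermitian) (h2 : A₂.IsHermitian) (hA : A = A₁ + Complex.I • A₂)
    (hN : Aᴴ * A = A * Aᴴ) (j : Fin n) :
    (1 / Real.sqrt 2) * singularValues (A₁ + A₂) j ≤ singularValues A j ∧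
    singularValues A j ≤ singularValues (matAbs A₁ + matAbs A₂) j := by
  classical
  -- A₁ and A₂ commute
  have hAH : Aᴴ = A₁ - Complex.I • A₂ := by
    rw [hA, conjTranspose_add, conjTranspose_smul, h1.eq, h2.eq]
    simp [Complex.star_def, Complex.conj_I, neg_smul, sub_eq_add_neg]
  have hcomm : A₁ * A₂ = A₂ * A₁ := by
    have hexp := hN
    rw [hAH, hA] at hexp
    have key : (2 * Complex.I) • (A₁ * A₂) = (2 * Complex.I) • (A₂ * A₁) := by
      have h0 : (A₁ - Complex.I • A₂) * (A₁ + Complex.I • A₂)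
          - (A₁ + Complex.I • A₂) * (A₁ - Complex.I • A₂) = 0 := sub_eq_zero.mpr hexp
      rw [← sub_eq_zero]
      rw [show (2 * Complex.I) • (A₁ * A₂) - (2 * Complex.I) • (A₂ * A₁)
        = (A₁ - Complex.I • A₂) * (A₁ + Complex.I • A₂)
          - (A₁ + Complex.I • A₂) * (A₁ - Complex.I • A₂) from by
          simp only [Matrix.add_mul, Matrix.mul_add, Matrix.sub_mul, Matrix.mul_sub,
            Matrix.smul_mul, Matrix.mul_smul, smul_smul]
          module]
      exact h0
    exact smul_right_injective _ (by simp [Complex.ext_iff] : (2 : ℂ) * Complex.I ≠ 0) key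
  -- joint eigenbasis
  have hsym1 : (toEuclideanLin A₁).IsSymmetric := (isHermitian_iff_isSymmetric).mp h1
  have hsym2 : (toEuclideanLin A₂).IsSymmetric := (isHermitian_iff_isSymmetric).mp h2
  have hC : Commute (toEuclideanLin A₁) (toEuclideanLin A₂) := by
    have key : ∀ M N : Matrix (Fin n) (Fin n) ℂ,
        (toEuclideanLin M) ∘ₗ (toEuclideanLin N) = toEuclideanLin (M * N) := by
      intro M N
      apply LinearMap.ext
      intro x
      simp [Matrix.toEuclideanLin_apply, mulVec_mulVec]
    rw [Commute, SemiconjBy, Module.End.mul_eq_comp, Module.End.mul_eq_comp, key, key, hcomm]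
  obtain ⟨u, a, b, hab⟩ := BasisAux.joint_eigenbasis hsym1 hsym2 hC
  set w : Fin n → (Fin n → ℂ) := fun k => u k with hw
  have hmv : ∀ (M : Matrix (Fin n) (Fin n) ℂ) (k : Fin n) (c : ℂ),
      toEuclideanLin M (u k) = c • u k → M *ᵥ w k = c • w k := by
    intro M k c h
    have := congrArg (WithLp.equiv 2 (Fin n → ℂ)) h
    simpa [Matrix.toEuclideanLin_apply] using this
  have hA₁ : ∀ k, A₁ *ᵥ w k = (a k : ℂ) • w k := fun k => hmv _ _ _ (hab k).1
  have hA₂ : ∀ k, A₂ *ᵥ w k = (b k : ℂ) • w k := fun k => hmv _ _ _ (hab k).2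
  have hU : (MatAux.colMat w)ᴴ * MatAux.colMat w = 1 := by
    apply MatAux.colMat_unitary
    intro k l
    have := orthonormal_iff_ite.mp u.orthonormal k l
    rw [PiLp.inner_apply] at this
    simpa [RCLike.inner_apply, mul_comm] using this
  -- eigen-relations
  have hAvec : ∀ k, A *ᵥ w k = ((a k : ℂ) + Complex.I * b k) • w k := by
    intro k
    rw [hA, Matrix.add_mulVec, Matrix.smul_mulVec, hA₁, hA₂, smul_smul, ← add_smul]
  have hAHvec : ∀ k, Aᴴ *ᵥ w k = ((a k : ℂ) - Complex.I * b k) • w k := by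
    intro k
    rw [hAH, Matrix.sub_mulVec, Matrix.smul_mulVec, hA₁, hA₂, smul_smul, ← sub_smul]
  have hAA : ∀ k, (Aᴴ * A) *ᵥ w k = (((a k) ^ 2 + (b k) ^ 2 : ℝ) : ℂ) • w k := by
    intro k
    rw [← mulVec_mulVec, hAvec, mulVec_smul, hAHvec, smul_smul]
    congr 1
    push_cast
    linear_combination (-((b k : ℂ)) ^ 2) * Complex.I_sq
  have hSumH : (A₁ + A₂).IsHermitian := h1.add h2
  have hSum : ∀ k, ((A₁ + A₂)ᴴ * (A₁ + A₂)) *ᵥ w k = (((a k + b k) ^ 2 : ℝ) : ℂ) • w k := by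
    intro k
    have hv : (A₁ + A₂) *ᵥ w k = ((a k : ℂ) + b k) • w k := by
      rw [Matrix.add_mulVec, hA₁, hA₂, ← add_smul]
    rw [← mulVec_mulVec, hv, mulVec_smul, hSumH.eq, hv, smul_smul]
    congr 1
    push_cast
    ring
  -- absolute values
  have habs : ∀ (M : Matrix (Fin n) (Fin n) ℂ) (c : Fin n → ℝ), M.IsHermitian →
      (∀ k, M *ᵥ w k = (c k : ℂ) • w k) →
      ∀ k, matAbs M *ᵥ w k = ((|c k| : ℝ) : ℂ) • w k := by
    intro M c hM hMv k
    have hMM : ∀ k, (Mᴴ * M) *ᵥ w k = (((c k) ^ 2 : ℝ) : ℂ) • w k := by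
      intro k
      rw [← mulVec_mulVec, hMv, mulVec_smul, hM.eq, hMv, smul_smul]
      congr 1
      push_cast
      ring
    set D : Matrix (Fin n) (Fin n) ℂ := diagonal (fun k => ((|c k| : ℝ) : ℂ)) with hD
    set N : Matrix (Fin n) (Fin n) ℂ := MatAux.colMat w * D * (MatAux.colMat w)ᴴ with hNdef
    have hNpsd : N.PosSemidef := by
      apply Matrix.PosSemidef.mul_mul_conjTranspose_same
      rw [hD, Matrix.posSemidef_diagonal_iff]
      intro i
      exact_mod_cast abs_nonneg (c i)
    have hNsq : N ^ 2 = Mᴴ * M := by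
      have hMrep : Mᴴ * M = MatAux.colMat w * diagonal (fun k => (((c k) ^ 2 : ℝ) : ℂ))
          * (MatAux.colMat w)ᴴ := MatAux.diag_rep hU hMM
      rw [sq, hNdef, hMrep]
      rw [show MatAux.colMat w * D * (MatAux.colMat w)ᴴ * (MatAux.colMat w * D * (MatAux.colMat w)ᴴ)
        = MatAux.colMat w * (D * ((MatAux.colMat w)ᴴ * MatAux.colMat w) * D) * (MatAux.colMat w)ᴴ from by
          simp only [Matrix.mul_assoc]]
      have hdd : (diagonal (fun k => ((|c k| : ℝ) : ℂ)) * diagonal (fun k => ((|c k| : ℝ) : ℂ))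
          : Matrix (Fin n) (Fin n) ℂ) = diagonal (fun k => (((c k) ^ 2 : ℝ) : ℂ)) := by
        rw [diagonal_mul_diagonal]
        exact congrArg Matrix.diagonal (funext fun i => by
          norm_cast
          rw [abs_mul_abs_self]
          ring)
      rw [hU, Matrix.mul_one, hD, hdd]
    have hN : N = matAbs M := by
      exact AbsAux.eq_matAbs hNpsd hNsq
    rw [← hN, hNdef]
    exact MatAux.rep_apply hU _ k
  have habs1 : ∀ k, matAbs A₁ *ᵥ w k = ((|a k| : ℝ) : ℂ) • w k := habs A₁ a h1 hA₁
  have habs2 : ∀ k, matAbs A₂ *ᵥ w k = ((|b k| : ℝ) : ℂ) • w k := habs A₂ b h2 hA₂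
  have hAbsH : (matAbs A₁ + matAbs A₂).IsHermitian := by
    apply Matrix.IsHermitian.add
    · exact AbsAux.matAbs_isHermitian A₁
    · exact AbsAux.matAbs_isHermitian A₂
  have hAbs : ∀ k, ((matAbs A₁ + matAbs A₂)ᴴ * (matAbs A₁ + matAbs A₂)) *ᵥ w k
      = (((|a k| + |b k|) ^ 2 : ℝ) : ℂ) • w k := by
    intro k
    have hv : (matAbs A₁ + matAbs A₂) *ᵥ w k = (((|a k| : ℝ) : ℂ) + ((|b k| : ℝ) : ℂ)) • w k := by
      rw [Matrix.add_mulVec, habs1 k, habs2 k, ← add_smul]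
    rw [← mulVec_mulVec, hv, mulVec_smul, hAbsH.eq, hv, smul_smul]
    congr 1
    push_cast
    ring
  -- singular values as sorted tuples
  have sA := fun j => MatAux.singularValues_eq_sorted hU
    (fun k => (a k) ^ 2 + (b k) ^ 2) (by exact_mod_cast hAA) j
  have sSum := fun j => MatAux.singularValues_eq_sorted hU
    (fun k => (a k + b k) ^ 2) (by exact_mod_cast hSum) j
  have sAbs := fun j => MatAux.singularValues_eq_sorted hU
    (fun k => (|a k| + |b k|) ^ 2) (by exact_mod_cast hAbs) j
  constructor
  · -- lower bound
    rw [sA j, sSum j]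
    set f : Fin n → ℝ := fun k => Real.sqrt ((a k + b k) ^ 2) with hf
    set g : Fin n → ℝ := fun k => Real.sqrt ((a k) ^ 2 + (b k) ^ 2) with hg
    set φ : ℝ → ℝ := fun x => (1 / Real.sqrt 2) * x with hφ
    have hφm : Monotone φ := fun x y hxy => by
      dsimp [φ]
      have : (0:ℝ) ≤ 1 / Real.sqrt 2 := by positivity
      nlinarith
    have hsort := SortAux.comp_mono_sort (f := f) hφm
    have hle : ∀ k, (φ ∘ f) k ≤ g k := by
      intro k
      dsimp [φ, f, g]
      rw [Real.sqrt_sq_eq_abs]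
      rw [show (1 : ℝ) / Real.sqrt 2 = Real.sqrt 2⁻¹ from by
        rw [Real.sqrt_inv, one_div]]
      rw [show |a k + b k| = Real.sqrt ((a k + b k) ^ 2) from (Real.sqrt_sq_eq_abs _).symm]
      rw [← Real.sqrt_mul (by positivity)]
      apply Real.sqrt_le_sqrt
      nlinarith [sq_nonneg (a k - b k)]
    calc (1 / Real.sqrt 2) * ((f ∘ Tuple.sort f) j.rev)
        = ((φ ∘ f) ∘ Tuple.sort f) j.rev := rfl
      _ = ((φ ∘ f) ∘ Tuple.sort (φ ∘ f)) j.rev := by rw [hsort]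
      _ ≤ (g ∘ Tuple.sort g) j.rev := SortAux.sort_le_sort hle j.rev
  · -- upper bound
    rw [sA j, sAbs j]
    apply SortAux.sort_le_sort
    intro k
    apply Real.sqrt_le_sqrt
    nlinarith [abs_nonneg (a k), abs_nonneg (b k), sq_abs (a k), sq_abs (b k),
      abs_mul_abs_self (a k), abs_mul_abs_self (b k), mul_nonneg (abs_nonneg (a k)) (abs_nonneg (b k))]
end

section
/- Let A be a bounded linear operator on a complex Hilbert space, with Cartesian decomposition A = A₁ + iA₂ where A₁ = (A + A*)/2 and A₂ = (A − A*)/(2i). Then √2·‖A₁ + A₂‖ ≤ ‖A + iA*‖ ≤ 2·‖A₁ + A₂‖, where ‖·‖ denotes the operator norm. -/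
/-- Let `A` be a bounded linear operator on a complex Hilbert space, with Cartesian
decomposition `A = A₁ + iA₂`. Then `√2·‖A₁ + A₂‖ ≤ ‖A + iA*‖ ≤ 2·‖A₁ + A₂‖`. -/
theorem stmt_13 {H : Type*} [NormedAddCommGroup H] [InnerProductSpace ℂ H] [CompleteSpace H]
    (A A₁ A₂ : H →L[ℂ] H) (h1 : IsSelfAdjoint A₁) (h2 : IsSelfAdjoint A₂)
    (hA : A = A₁ + Complex.I • A₂) :
    Real.sqrt 2 * ‖A₁ + A₂‖ ≤ ‖A + Complex.I • ContinuousLinearMap.adjoint A‖ ∧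
    ‖A + Complex.I • ContinuousLinearMap.adjoint A‖ ≤ 2 * ‖A₁ + A₂‖ := by
  have hadj : ContinuousLinearMap.adjoint A = A₁ - Complex.I • A₂ := by
    rw [hA, map_add, h1.adjoint_eq, LinearIsometryEquiv.map_smulₛₗ, Complex.conj_I,
      h2.adjoint_eq, neg_smul, sub_eq_add_neg]
  have key : A + Complex.I • ContinuousLinearMap.adjoint A
      = (1 + Complex.I) • (A₁ + A₂) := by
    rw [hadj, hA]
    ext x
    simp [smul_sub, smul_smul, Complex.I_mul_I, add_smul, smul_add]
    abel
  have hnorm : ‖A + Complex.I • ContinuousLinearMap.adjoint A‖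
      = Real.sqrt 2 * ‖A₁ + A₂‖ := by
    rw [key, norm_smul, Complex.norm_def, Complex.normSq_apply]
    norm_num
  constructor
  · rw [hnorm]
  · rw [hnorm]
    have h2le : Real.sqrt 2 ≤ 2 := by
      nlinarith [Real.sq_sqrt (by norm_num : (2:ℝ) ≥ 0), Real.sqrt_nonneg 2]
    exact mul_le_mul_of_nonneg_right h2le (norm_nonneg _)
end

section
/- Let A be a bounded normal operator on a complex Hilbert space with Cartesian decomposition A = A₁ + iA₂. Then (1/√2)·‖A₁ + A₂‖ ≤ ‖A‖ ≤ ‖ |A₁| + |A₂| ‖, where |B| denotes the absolute value (continuous functional calculus applied to the absolute value function) of a self-adjoint operator B, and ‖·‖ is the operator norm. -/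
open ContinuousLinearMap in
lemma aux_sq_le_norm_smul {H : Type*} [NormedAddCommGroup H] [InnerProductSpace ℂ H]
    [CompleteSpace H] (b : H →L[ℂ] H) (hb : 0 ≤ b) : b ^ 2 ≤ ‖b‖ • b := by
  have hsa : IsSelfAdjoint b := .of_nonneg hb
  calc b ^ 2 = cfc (fun t : ℝ => t ^ 2) b := by rw [cfc_pow_id (R := ℝ) b]
    _ ≤ cfc (fun t : ℝ => ‖b‖ • t) b := by
        refine cfc_mono fun x hx => ?_
        have hx0 : 0 ≤ x := spectrum_nonneg_of_nonneg hb hx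
        have hxn : x ≤ ‖b‖ := by
          have h := spectrum.norm_le_norm_mul_of_mem hx
          have h1 : ‖(1 : H →L[ℂ] H)‖ ≤ 1 := ContinuousLinearMap.norm_id_le
          have := h.trans (mul_le_of_le_one_right (norm_nonneg _) h1)
          simpa [abs_of_nonneg hx0] using this
        calc x ^ 2 = x * x := sq x
          _ ≤ ‖b‖ * x := by nlinarith
          _ = ‖b‖ • x := rfl
    _ = ‖b‖ • b := cfc_smul_id ‖b‖ b

set_option maxHeartbeats 1000000 in
set_option synthInstance.maxHeartbeats 400000 in
/-- Let `A` be a bounded normal operator on a complex Hilbert space with Cartesian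
decomposition `A = A₁ + iA₂`. Then `(1/√2)·‖A₁ + A₂‖ ≤ ‖A‖ ≤ ‖|A₁| + |A₂|‖`, where `|B|`
is the continuous functional calculus of the self-adjoint operator `B` applied to `|·|`. -/
theorem stmt_15 {H : Type*} [NormedAddCommGroup H] [InnerProductSpace ℂ H] [CompleteSpace H]
    (A A₁ A₂ : H →L[ℂ] H) (h1 : IsSelfAdjoint A₁) (h2 : IsSelfAdjoint A₂)
    (hA : A = A₁ + Complex.I • A₂)
    (hN : A * ContinuousLinearMap.adjoint A = ContinuousLinearMap.adjoint A * A) :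
    (1 / Real.sqrt 2) * ‖A₁ + A₂‖ ≤ ‖A‖ ∧
    ‖A‖ ≤ ‖cfc (fun t : ℝ => |t|) A₁ + cfc (fun t : ℝ => |t|) A₂‖ := by
  have hAstar : ContinuousLinearMap.adjoint A = A₁ - Complex.I • A₂ := by
    rw [← ContinuousLinearMap.star_eq_adjoint, hA, star_add, star_smul, h1.star_eq, h2.star_eq]
    simp [sub_eq_add_neg]
  -- commutation
  have hcomm : A₁ * A₂ = A₂ * A₁ := by
    have h := hN
    rw [hAstar, hA] at h
    simp only [mul_add, add_mul, mul_sub, sub_mul, smul_mul_assoc, mul_smul_comm, smul_smul,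
      smul_add, smul_sub, Complex.I_mul_I, neg_one_smul, neg_smul, smul_neg, neg_neg] at h
    have h2I : (2 * Complex.I) • (A₂ * A₁) = (2 * Complex.I) • (A₁ * A₂) := by
      rw [two_mul, add_smul, add_smul]
      linear_combination (norm := abel) h
    exact (smul_right_injective (H →L[ℂ] H)
      (by simp [Complex.I_ne_zero] : (2 * Complex.I) ≠ 0) h2I).symm
  have key : ContinuousLinearMap.adjoint A * A = A₁ ^ 2 + A₂ ^ 2 := by
    rw [hAstar, hA]
    simp only [mul_add, add_mul, mul_sub, sub_mul, smul_mul_assoc, mul_smul_comm, smul_smul,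
      smul_add, smul_sub, Complex.I_mul_I, neg_one_smul, neg_smul, smul_neg, neg_neg, one_smul,
      pow_two]
    rw [hcomm]
    abel
  have normsq : ‖A‖ * ‖A‖ = ‖A₁ ^ 2 + A₂ ^ 2‖ := by
    rw [← key, ← ContinuousLinearMap.star_eq_adjoint, CStarRing.norm_star_mul_self]
  have hsqnn : (0 : H →L[ℂ] H) ≤ A₁ ^ 2 + A₂ ^ 2 := add_nonneg h1.sq_nonneg h2.sq_nonneg
  constructor
  · -- left inequality
    have hS : IsSelfAdjoint (A₁ + A₂) := h1.add h2
    have hid : (A₁ + A₂) ^ 2 + (A₁ - A₂) ^ 2 = (2 : ℝ) • (A₁ ^ 2 + A₂ ^ 2) := by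
      simp only [pow_two, add_mul, mul_add, sub_mul, mul_sub, smul_add, two_smul]
      abel
    have hle : (A₁ + A₂) ^ 2 ≤ (2 : ℝ) • (A₁ ^ 2 + A₂ ^ 2) := by
      rw [← hid]
      exact le_add_of_nonneg_right (h1.sub h2).sq_nonneg
    have hnorm : ‖(A₁ + A₂) ^ 2‖ ≤ ‖(2 : ℝ) • (A₁ ^ 2 + A₂ ^ 2)‖ :=
      CStarAlgebra.norm_le_norm_of_nonneg_of_le hS.sq_nonneg hle
    have e1 : ‖(A₁ + A₂) ^ 2‖ = ‖A₁ + A₂‖ * ‖A₁ + A₂‖ := by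
      rw [pow_two, ← CStarRing.norm_star_mul_self (x := A₁ + A₂), hS.star_eq]
    have e2 : ‖(2 : ℝ) • (A₁ ^ 2 + A₂ ^ 2)‖ = 2 * (‖A‖ * ‖A‖) := by
      rw [norm_smul, normsq]; norm_num
    rw [e1, e2] at hnorm
    have hs2 : Real.sqrt 2 * Real.sqrt 2 = 2 := Real.mul_self_sqrt (by norm_num)
    have hs2pos : (0 : ℝ) < Real.sqrt 2 := Real.sqrt_pos.mpr (by norm_num)
    rw [div_mul_eq_mul_div, one_mul, div_le_iff₀ hs2pos]
    nlinarith [norm_nonneg (A₁ + A₂), norm_nonneg A, mul_nonneg (norm_nonneg A) hs2pos.le]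
  · -- right inequality
    set B := cfc (fun t : ℝ => |t|) A₁ with hBdef
    set C := cfc (fun t : ℝ => |t|) A₂ with hCdef
    have hB0 : (0 : H →L[ℂ] H) ≤ B := cfc_nonneg fun x _ => abs_nonneg x
    have hC0 : (0 : H →L[ℂ] H) ≤ C := cfc_nonneg fun x _ => abs_nonneg x
    have hBC0 : (0 : H →L[ℂ] H) ≤ B + C := add_nonneg hB0 hC0
    have hB2 : B ^ 2 = A₁ ^ 2 := by
      rw [hBdef, ← cfc_pow (fun t : ℝ => |t|) 2 A₁]
      rw [cfc_congr (g := fun t : ℝ => t ^ 2) (fun x _ => sq_abs x), cfc_pow_id (R := ℝ) A₁]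
    have hC2 : C ^ 2 = A₂ ^ 2 := by
      rw [hCdef, ← cfc_pow (fun t : ℝ => |t|) 2 A₂]
      rw [cfc_congr (g := fun t : ℝ => t ^ 2) (fun x _ => sq_abs x), cfc_pow_id (R := ℝ) A₂]
    have hnB : ‖B‖ ≤ ‖B + C‖ :=
      CStarAlgebra.norm_le_norm_of_nonneg_of_le hB0 (le_add_of_nonneg_right hC0)
    have hnC : ‖C‖ ≤ ‖B + C‖ :=
      CStarAlgebra.norm_le_norm_of_nonneg_of_le hC0 (le_add_of_nonneg_left hB0)
    have hBle : B ^ 2 ≤ ‖B + C‖ • B :=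
      (aux_sq_le_norm_smul B hB0).trans (by
        have : (0 : H →L[ℂ] H) ≤ (‖B + C‖ - ‖B‖) • B := smul_nonneg (by linarith) hB0
        have := le_add_of_nonneg_right (a := ‖B‖ • B) this
        rwa [← add_smul, add_sub_cancel] at this)
    have hCle : C ^ 2 ≤ ‖B + C‖ • C :=
      (aux_sq_le_norm_smul C hC0).trans (by
        have : (0 : H →L[ℂ] H) ≤ (‖B + C‖ - ‖C‖) • C := smul_nonneg (by linarith) hC0
        have := le_add_of_nonneg_right (a := ‖C‖ • C) this
        rwa [← add_smul, add_sub_cancel] at this)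
    have hsum : A₁ ^ 2 + A₂ ^ 2 ≤ ‖B + C‖ • (B + C) := by
      rw [← hB2, ← hC2, smul_add]
      exact add_le_add hBle hCle
    have hnorm : ‖A₁ ^ 2 + A₂ ^ 2‖ ≤ ‖B + C‖ * ‖B + C‖ := by
      refine (CStarAlgebra.norm_le_norm_of_nonneg_of_le hsqnn hsum).trans ?_
      rw [norm_smul]
      exact mul_le_mul_of_nonneg_right (le_of_eq (Real.norm_of_nonneg (norm_nonneg _))) (norm_nonneg _)
    rw [← normsq] at hnorm
    nlinarith [norm_nonneg A, norm_nonneg (B + C)]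
end
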